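/- The only integers n ≥ 3 such that the divisors of n! listed in increasing order have nondecreasing consecutive differences are n = 3 and n = 4. -/

import Mathlib

/-- The divisors of `N` listed in increasing order have nondecreasing
consecutive differences. -/
def NondecGaps (N : ℕ) : Prop :=
  let l := N.divisors.sort (· ≤ ·)
  ∀ i : ℕ, i + 2 < l.length → l[i + 1]! - l[i]! ≤ l[i + 2]! - l[i + 1]!

private lemma mul_dvd_factorial' {a b n : ℕ} (ha : 0 < a) (hab : a < b) (hb : b ≤ n) :
    a * b ∣ n.factorial := by
  have hsub : ({a, b} : Finset ℕ) ⊆ Finset.Icc 1 n := by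
    intro x hx
    simp only [Finset.mem_insert, Finset.mem_singleton] at hx
    rcases hx with rfl | rfl <;> simp only [Finset.mem_Icc] <;> omega
  have h1 : ∏ x ∈ ({a, b} : Finset ℕ), x = a * b := Finset.prod_pair hab.ne
  have h2 : ∏ x ∈ Finset.Icc 1 n, x = n.factorial := by
    rw [← Finset.Ico_add_one_right_eq_Icc, Finset.prod_Ico_id_eq_factorial]
  calc a * b = ∏ x ∈ ({a, b} : Finset ℕ), x := h1.symm
    _ ∣ ∏ x ∈ Finset.Icc 1 n, x := Finset.prod_dvd_prod_of_subset _ _ _ hsub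
    _ = n.factorial := h2

private lemma exists_adjacent {l : List ℕ} (hs : l.Pairwise (· < ·)) {a b : ℕ}
    (ha : a ∈ l) (hb : b ∈ l) (hab : a < b)
    (hno : ∀ x ∈ l, ¬ (a < x ∧ x < b)) :
    ∃ i : ℕ, ∃ h1 : i + 1 < l.length,
      l[i]'(Nat.lt_of_succ_lt h1) = a ∧ l[i + 1]'h1 = b := by
  have hS := List.pairwise_iff_getElem.1 hs
  obtain ⟨i, hi, rfl⟩ := List.mem_iff_getElem.1 ha
  obtain ⟨j, hj, rfl⟩ := List.mem_iff_getElem.1 hb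
  have hij : i < j := by
    by_contra hc
    push_neg at hc
    rcases Nat.eq_or_lt_of_le hc with he | hlt'
    · subst he; exact absurd hab (lt_irrefl _)
    · exact absurd hab (Nat.lt_asymm (hS j i hj hi hlt'))
  have h1 : i + 1 < l.length := by omega
  refine ⟨i, h1, rfl, ?_⟩
  rcases Nat.eq_or_lt_of_le (Nat.succ_le_of_lt hij) with he | hlt
  · subst he; rfl
  · exact absurd ⟨hS i (i+1) hi h1 (by omega), hS (i+1) j h1 hj hlt⟩
      (hno _ (List.getElem_mem h1))

private lemma not_nondecGaps {N a b c : ℕ} (ha : a ∈ N.divisors) (hb : b ∈ N.divisors)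
    (hc : c ∈ N.divisors) (hab : a < b) (hbc : b < c)
    (hg1 : ∀ x ∈ N.divisors, ¬ (a < x ∧ x < b))
    (hg2 : ∀ x ∈ N.divisors, ¬ (b < x ∧ x < c))
    (hviol : c - b < b - a) : ¬ NondecGaps N := by
  intro H
  have hs : (N.divisors.sort (· ≤ ·)).Pairwise (· < ·) := N.divisors.sortedLT_sort.pairwise
  have hS := List.pairwise_iff_getElem.1 hs
  have hmem : ∀ x : ℕ, x ∈ N.divisors.sort (· ≤ ·) ↔ x ∈ N.divisors :=
    fun x => Finset.mem_sort _
  obtain ⟨i, hi1, hia, hib⟩ := exists_adjacent hs ((hmem a).2 ha) ((hmem b).2 hb) hab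
    (fun x hx => hg1 x ((hmem x).1 hx))
  obtain ⟨j, hj1, hjb, hjc⟩ := exists_adjacent hs ((hmem b).2 hb) ((hmem c).2 hc) hbc
    (fun x hx => hg2 x ((hmem x).1 hx))
  have hij : i + 1 = j := by
    rcases Nat.lt_trichotomy (i+1) j with h | h | h
    · have := hS (i+1) j hi1 (by omega) h
      rw [hib, hjb] at this; omega
    · exact h
    · have := hS j (i+1) (by omega) hi1 h
      rw [hib, hjb] at this; omega
  subst hij
  have hlen : i + 2 < (N.divisors.sort (· ≤ ·)).length := hj1
  have hH := H i hlen
  rw [getElem!_pos (N.divisors.sort (· ≤ ·)) i (Nat.lt_of_succ_lt (Nat.lt_of_succ_lt hlen)),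
      getElem!_pos (N.divisors.sort (· ≤ ·)) (i + 1) (Nat.lt_of_succ_lt hlen),
      getElem!_pos (N.divisors.sort (· ≤ ·)) (i + 2) hlen] at hH
  rw [hia, hib] at hH
  have hc2 : (N.divisors.sort (· ≤ ·))[i+2]'hlen = c := hjc
  rw [hc2] at hH
  omega

private lemma sorted_le_of_lt {l : List ℕ} (h : l.Pairwise (· < ·)) : l.Pairwise (· ≤ ·) :=
  h.imp (fun h => le_of_lt h)

private lemma sort_divisors_6 : (Nat.divisors 6).sort (· ≤ ·) = [1, 2, 3, 6] := by
  refine (fun hp h1 h2 => List.Perm.eq_of_pairwise' (r := (· ≤ ·)) h1 h2 hp) ?_ ?_ ?_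
  · apply List.perm_of_nodup_nodup_toFinset_eq (Finset.sort_nodup _ _) (by decide)
    rw [Finset.sort_toFinset]
    decide
  · exact Finset.pairwise_sort _ _
  · decide

private lemma sort_divisors_24 :
    (Nat.divisors 24).sort (· ≤ ·) = [1, 2, 3, 4, 6, 8, 12, 24] := by
  refine (fun hp h1 h2 => List.Perm.eq_of_pairwise' (r := (· ≤ ·)) h1 h2 hp) ?_ ?_ ?_
  · apply List.perm_of_nodup_nodup_toFinset_eq (Finset.sort_nodup _ _) (by decide)
    rw [Finset.sort_toFinset]
    decide
  · exact Finset.pairwise_sort _ _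
  · decide

private lemma nondec6 : NondecGaps 6 := by
  intro i hi
  rw [sort_divisors_6] at hi ⊢
  have hi' : i + 2 < 4 := by simpa using hi
  have : i < 2 := by omega
  interval_cases i <;> decide

private lemma nondec24 : NondecGaps 24 := by
  intro i hi
  rw [sort_divisors_24] at hi ⊢
  have hi' : i + 2 < 8 := by simpa using hi
  have : i < 6 := by omega
  interval_cases i <;> decide

private lemma main_neg (n : ℕ) (hn : 5 ≤ n) : ¬ NondecGaps n.factorial := by
  have hex : ∃ q, n < q ∧ q.Prime := by
    obtain ⟨p, hp1, hp2⟩ := Nat.exists_infinite_primes (n + 1)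
    exact ⟨p, by omega, hp2⟩
  obtain ⟨q, hq1, hq2, hmin, hub⟩ :
      ∃ q, n < q ∧ q.Prime ∧ (∀ m, m < q → ¬(n < m ∧ m.Prime)) ∧ q ≤ 2 * n - 1 := by
    refine ⟨Nat.find hex, (Nat.find_spec hex).1, (Nat.find_spec hex).2,
      fun m hm => Nat.find_min hex hm, ?_⟩
    obtain ⟨p, hp, hp1, hp2⟩ := Nat.bertrand n (by omega)
    have hle : Nat.find hex ≤ p := Nat.find_min' hex ⟨hp1, hp⟩
    rcases hp.eq_two_or_odd with h2 | h2 <;> omega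
  have h7 : 7 ≤ q := by
    have hoddq : q % 2 = 1 := by
      rcases hq2.eq_two_or_odd with h2 | h2
      · omega
      · exact h2
    by_contra hc
    push_neg at hc
    have h6 : q = 6 := by omega
    rw [h6] at hq2
    exact absurd hq2 (by decide)
  obtain ⟨r, hr⟩ : ∃ r, q = r + 7 := ⟨q - 7, by omega⟩
  have hoddq : q % 2 = 1 := by
    rcases hq2.eq_two_or_odd with h2 | h2
    · omega
    · exact h2
  obtain ⟨m, hm⟩ : ∃ m, q = 2 * m + 1 := ⟨q / 2, by omega⟩
  have hm3 : 3 ≤ m := by omega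
  have hmn : m + 1 ≤ n := by omega
  set N := n.factorial with hN
  have hNpos : 0 < N := Nat.factorial_pos n
  -- divisibility of q+1, q-1, q-2
  have hd1 : q + 1 ∣ N := by
    have : 2 * (m + 1) ∣ N := mul_dvd_factorial' (by omega) (by omega) hmn
    have he : q + 1 = 2 * (m + 1) := by omega
    rwa [he]
  have hd2 : q - 1 ∣ N := by
    have : 2 * m ∣ N := mul_dvd_factorial' (by omega) (by omega) (by omega)
    have he : q - 1 = 2 * m := by omega
    rwa [he]
  have hd3 : q - 2 ∣ N := by
    rcases le_or_gt (q - 2) n with hle | hgt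
    · exact Nat.dvd_factorial (by omega) hle
    · -- q-2 > n, composite
      have hne1 : q - 2 ≠ 1 := by omega
      obtain ⟨p, t, hpp, ht, hpt, hp3⟩ :
          ∃ p t, p.Prime ∧ q - 2 = p * t ∧ p ≤ t ∧ 3 ≤ p := by
        have hpp : (q - 2).minFac.Prime := Nat.minFac_prime hne1
        have hpd : (q - 2).minFac ∣ q - 2 := Nat.minFac_dvd _
        have hpne : (q - 2).minFac ≠ q - 2 := fun h =>
          hmin (q - 2) (by omega) ⟨by omega, h ▸ hpp⟩
        have hplt : (q - 2).minFac < q - 2 :=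
          lt_of_le_of_ne (Nat.le_of_dvd (by omega) hpd) hpne
        have hpd' := hpd
        obtain ⟨t, ht⟩ := hpd'
        have htpos : 2 ≤ t := by
          rcases Nat.lt_or_ge t 2 with h | h
          · interval_cases t <;> omega
          · exact h
        have hpt : (q - 2).minFac ≤ t :=
          Nat.minFac_le_of_dvd htpos (by rw [ht]; exact dvd_mul_left t _)
        have hpodd : ¬ (2 ∣ q - 2) := by omega
        have hp3 : 3 ≤ (q - 2).minFac := by
          have h2 := hpp.two_le
          rcases Nat.eq_or_lt_of_le h2 with he | hlt3
          · have h2d := Nat.minFac_dvd (q - 2)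
            rw [← he] at h2d
            exact absurd h2d hpodd
          · omega
        exact ⟨_, t, hpp, ht, hpt, hp3⟩
      have htn : t ≤ n := by
        have h3t : 3 * t ≤ p * t := Nat.mul_le_mul_right t hp3
        omega
      rcases lt_or_eq_of_le hpt with hlt | heq
      · have hd : p * t ∣ N := mul_dvd_factorial' (by omega) hlt htn
        rwa [← ht] at hd
      · -- q - 2 = p * p
        subst heq
        have h2pn : 2 * p ≤ n := by
          rcases le_or_gt 5 p with h5 | h5
          · have h5p : 5 * p ≤ p * p := Nat.mul_le_mul_right p h5
            omega
          · have h34 : p = 3 ∨ p = 4 := by omega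
            rcases h34 with h3 | h4
            · have h9 : p * p = 9 := by rw [h3]
              omega
            · rw [h4] at hpp; exact absurd hpp (by decide)
        have hdd : p * (2 * p) ∣ N := mul_dvd_factorial' (by omega) (by omega) h2pn
        have hsq : p * p ∣ p * (2 * p) := ⟨2, by ring⟩
        rw [ht]
        exact dvd_trans hsq hdd
  have hqnd : ¬ q ∣ N := by
    rw [hN, hq2.dvd_factorial]
    omega
  -- the three divisors
  set a := N / (q + 1) with hadef
  set b := N / (q - 1) with hbdef
  set c := N / (q - 2) with hcdef
  have hae : a * (q + 1) = N := Nat.div_mul_cancel hd1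
  have hbe : b * (q - 1) = N := Nat.div_mul_cancel hd2
  have hce : c * (q - 2) = N := Nat.div_mul_cancel hd3
  -- comparison helper
  have hcmp : ∀ {A B u v : ℕ}, A * u = N → B * v = N → A < B → v < u := by
    intro A B u v hA hB hAB
    by_contra hc
    push_neg at hc
    have hv : 0 < v := by
      rcases Nat.eq_zero_or_pos v with h0 | h
      · rw [h0, Nat.mul_zero] at hB; omega
      · exact h
    have h1 : A * u ≤ A * v := Nat.mul_le_mul_left A hc
    have h2 : A * v < B * v := Nat.mul_lt_mul_of_lt_of_le hAB (le_refl v) hv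
    omega
  have hcmp' : ∀ {A B u v : ℕ}, A * u = N → B * v = N → v < u → A < B := by
    intro A B u v hA hB hvu
    by_contra hc
    push_neg at hc
    have hA0 : 0 < A := by
      rcases Nat.eq_zero_or_pos A with h0 | h
      · rw [h0, Nat.zero_mul] at hA; omega
      · exact h
    have h1 : A * v < A * u := Nat.mul_lt_mul_of_le_of_lt (le_refl A) hvu hA0
    have h2 : B * v ≤ A * v := Nat.mul_le_mul_right v hc
    omega
  have hab : a < b := hcmp' hae hbe (by omega)
  have hbc : b < c := hcmp' hbe hce (by omega)
  -- membership
  have hmema : a ∈ N.divisors := Nat.mem_divisors.2 ⟨⟨q + 1, by omega⟩, by omega⟩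
  have hmemb : b ∈ N.divisors := Nat.mem_divisors.2 ⟨⟨q - 1, by omega⟩, by omega⟩
  have hmemc : c ∈ N.divisors := Nat.mem_divisors.2 ⟨⟨q - 2, by omega⟩, by omega⟩
  -- gap conditions
  have hg1 : ∀ x ∈ N.divisors, ¬ (a < x ∧ x < b) := by
    rintro x hx ⟨hx1, hx2⟩
    obtain ⟨hxd, -⟩ := Nat.mem_divisors.1 hx
    obtain ⟨y, hy⟩ := hxd
    have hy' : x * y = N := hy.symm
    have hyu : y < q + 1 := hcmp hae hy' hx1
    have hyl : q - 1 < y := hcmp hy' hbe hx2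
    have hyq : y = q := by omega
    exact hqnd ⟨x, by rw [hy, hyq, Nat.mul_comm]⟩
  have hg2 : ∀ x ∈ N.divisors, ¬ (b < x ∧ x < c) := by
    rintro x hx ⟨hx1, hx2⟩
    obtain ⟨hxd, -⟩ := Nat.mem_divisors.1 hx
    obtain ⟨y, hy⟩ := hxd
    have hy' : x * y = N := hy.symm
    have hyu : y < q - 1 := hcmp hbe hy' hx1
    have hyl : q - 2 < y := hcmp hy' hce hx2
    omega
  -- the violation : c - b < b - a, i.e. a + c < 2 * b
  have hviol : c - b < b - a := by
    have key : (a + c) * ((q - 2) * ((q - 1) * (q + 1))) <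
        (2 * b) * ((q - 2) * ((q - 1) * (q + 1))) := by
      have e1 : a * ((q - 2) * ((q - 1) * (q + 1))) = N * ((q - 2) * (q - 1)) := by
        calc a * ((q - 2) * ((q - 1) * (q + 1)))
            = (a * (q + 1)) * ((q - 2) * (q - 1)) := by ring
          _ = N * ((q - 2) * (q - 1)) := by rw [hae]
      have e2 : c * ((q - 2) * ((q - 1) * (q + 1))) = N * ((q - 1) * (q + 1)) := by
        calc c * ((q - 2) * ((q - 1) * (q + 1)))
            = (c * (q - 2)) * ((q - 1) * (q + 1)) := by ring
          _ = N * ((q - 1) * (q + 1)) := by rw [hce]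
      have e3 : (2 * b) * ((q - 2) * ((q - 1) * (q + 1))) =
          N * (2 * ((q - 2) * (q + 1))) := by
        calc (2 * b) * ((q - 2) * ((q - 1) * (q + 1)))
            = (b * (q - 1)) * (2 * ((q - 2) * (q + 1))) := by ring
          _ = N * (2 * ((q - 2) * (q + 1))) := by rw [hbe]
      rw [Nat.add_mul, e1, e2, e3, ← Nat.mul_add]
      apply Nat.mul_lt_mul_of_le_of_lt (le_refl N) _ hNpos
      have hq7 : q = r + 7 := hr
      rw [hq7]
      have e4 : r + 7 - 2 = r + 5 := by omega
      have e5 : r + 7 - 1 = r + 6 := by omega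
      rw [e4, e5]
      ring_nf
      nlinarith [r.zero_le]
    have h2b : a + c < 2 * b := by
      have hKpos : 0 < (q - 2) * ((q - 1) * (q + 1)) := by
        apply Nat.mul_pos (by omega) (Nat.mul_pos (by omega) (by omega))
      exact Nat.lt_of_mul_lt_mul_right key
    omega
  exact not_nondecGaps hmema hmemb hmemc hab hbc hg1 hg2 hviol

theorem stmt_12 (n : ℕ) (hn : 3 ≤ n) :
    NondecGaps (Nat.factorial n) ↔ n = 3 ∨ n = 4 := by
  constructor
  · intro H
    by_contra hcon
    push_neg at hcon
    have hn5 : 5 ≤ n := by omega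
    exact main_neg n hn5 H
  · rintro (rfl | rfl)
    · have h : Nat.factorial 3 = 6 := rfl
      rw [h]; exact nondec6
    · have h : Nat.factorial 4 = 24 := rfl
      rw [h]; exact nondec24
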